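/- For every a ∈ A one has Σ ε(σ(a₍₁₎)) · a₍₂₎ = S²(σ'(a)). (This expresses a ⊲ δ̂⁻¹ = S²(σ'(a)), where δ̂⁻¹ = ε∘σ is the inverse of the modular element of the dual.) -/

import Mathlib

open TensorProduct HopfAlgebra

/-- `a ⊲ f = Σ f(a₍₁₎) a₍₂₎` : the standard right action of a linear functional on `A`. -/
noncomputable def rAct {A : Type*} [Ring A] [HopfAlgebra ℂ A] (f : A →ₗ[ℂ] ℂ) : A →ₗ[ℂ] A :=
  (TensorProduct.lid ℂ A).toLinearMap ∘ₗ LinearMap.rTensor A f ∘ₗ Coalgebra.comul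

section AuxHopfDev

open Coalgebra


variable {A : Type*} [Ring A] [HopfAlgebra ℂ A]

variable {ι κ ι₁ ι₂ ι₃ ι₄ : Type*}

local notation "S" => (antipode (R := ℂ) (A := A))
local notation "ε" => (counit (R := ℂ) (A := A))
local notation "Δ" => (comul (R := ℂ) (A := A))

lemma C1 {a : A} (r : Repr ℂ a ι) : ∑ i ∈ r.index, ε (r.right i) • r.left i = a := by
  have h := congrArg (TensorProduct.rid ℂ A) (sum_tmul_counit_eq r)
  rw [map_sum] at h
  simp only [rid_tmul] at h
  rw [h, one_smul]

lemma C2 {a : A} (r : Repr ℂ a ι) : ∑ i ∈ r.index, ε (r.left i) • r.right i = a := by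
  have h := congrArg (TensorProduct.lid ℂ A) (sum_counit_tmul_eq r)
  rw [map_sum] at h
  simp only [lid_tmul] at h
  rw [h, one_smul]

lemma collapse_eps_left {x : A} (r : Repr ℂ x ι) (f : A →ₗ[ℂ] A) :
    ∑ i ∈ r.index, ε (r.left i) • f (r.right i) = f x := by
  calc ∑ i ∈ r.index, ε (r.left i) • f (r.right i)
      = f (∑ i ∈ r.index, ε (r.left i) • r.right i) := by simp [map_sum, map_smul]
    _ = f x := by rw [C2]

lemma collapse_eps_right {x : A} (r : Repr ℂ x ι) (f : A →ₗ[ℂ] A) :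
    ∑ i ∈ r.index, ε (r.right i) • f (r.left i) = f x := by
  calc ∑ i ∈ r.index, ε (r.right i) • f (r.left i)
      = f (∑ i ∈ r.index, ε (r.right i) • r.left i) := by simp [map_sum, map_smul]
    _ = f x := by rw [C1]

/-- Repr of a product from Reprs of the factors. -/
noncomputable def reprMul {x y : A} (rx : Repr ℂ x ι) (ry : Repr ℂ y κ) : Repr ℂ (x * y) (ι × κ) where
  index := rx.index ×ˢ ry.index
  left := fun p => rx.left p.1 * ry.left p.2
  right := fun p => rx.right p.1 * ry.right p.2
  eq := by
    rw [Bialgebra.comul_mul, ← rx.eq, ← ry.eq, Finset.sum_mul_sum]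
    rw [Finset.sum_product]
    simp [Algebra.TensorProduct.tmul_mul_tmul]

noncomputable def reprOne : Repr ℂ (1 : A) (Fin 1) :=
  ⟨({0} : Finset (Fin 1)), fun _ => 1, fun _ => 1, by
    rw [Bialgebra.comul_one]; simp [Algebra.TensorProduct.one_def]⟩

lemma S_one : S 1 = (1 : A) := by
  have h := sum_antipode_mul_eq_smul (R := ℂ) (reprOne (A := A))
  simpa [reprOne] using h

lemma eps_S (a : A) : ε (S a) = ε a := by
  have h := congrArg ε (sum_antipode_mul_eq_smul (R := ℂ) (ℛ ℂ a))
  simp only [map_sum, Bialgebra.counit_mul, map_smul, Bialgebra.counit_one, smul_eq_mul,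
    mul_one] at h
  calc ε (S a) = ε (S (∑ i ∈ (ℛ ℂ a).index, ε ((ℛ ℂ a).right i) • (ℛ ℂ a).left i)) := by rw [C1]
    _ = ∑ i ∈ (ℛ ℂ a).index, ε (S ((ℛ ℂ a).left i)) * ε ((ℛ ℂ a).right i) := by
        simp [map_sum, map_smul, mul_comm, smul_eq_mul]
    _ = ε a := h

noncomputable def collapse3 : A ⊗[ℂ] (A ⊗[ℂ] A) →ₗ[ℂ] A :=
  (LinearMap.mul' ℂ A) ∘ₗ LinearMap.lTensor A (LinearMap.mul' ℂ A)

@[simp] lemma collapse3_tmul (x y z : A) :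
    collapse3 (x ⊗ₜ[ℂ] (y ⊗ₜ[ℂ] z)) = x * (y * z) := rfl

/-- The coassociativity exchange engine for triple products. -/
lemma tri_exchange (f₁ f₂ f₃ : A →ₗ[ℂ] A) {a : A} (r : Repr ℂ a ι)
    (rL : ∀ i : r.ι, Repr ℂ (r.left i) ι₁) (rR : ∀ i : r.ι, Repr ℂ (r.right i) ι₂) :
    ∑ i ∈ r.index, ∑ j ∈ (rR i).index,
      f₁ (r.left i) * (f₂ ((rR i).left j) * f₃ ((rR i).right j))
    = ∑ i ∈ r.index, ∑ j ∈ (rL i).index,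
      f₁ ((rL i).left j) * (f₂ ((rL i).right j) * f₃ (r.right i)) := by
  have h := sum_map_tmul_tmul_eq (F := A →ₗ[ℂ] A) f₁ f₂ f₃ a (repr := r) (a₁ := rL) (a₂ := rR)
  have h2 := congrArg collapse3 h
  simpa only [map_sum, collapse3_tmul] using h2

lemma sum_mul_antipode_pair {x y : A} (rx : Repr ℂ x ι) (ry : Repr ℂ y κ) :
    ∑ l ∈ ry.index, ∑ k ∈ rx.index,
      (rx.left k * ry.left l) * S (rx.right k * ry.right l) = (ε x * ε y) • (1 : A) := by
  have h := sum_mul_antipode_eq_smul (R := ℂ) (reprMul rx ry)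
  simpa [reprMul, Finset.sum_product_right, Bialgebra.counit_mul] using h

set_option maxHeartbeats 1000000 in
lemma S_mul_core (a b : A) (ra : Repr ℂ a ι) (rb : Repr ℂ b κ)
    (raL : ∀ i : ra.ι, Repr ℂ (ra.left i) ι₁) (raR : ∀ i : ra.ι, Repr ℂ (ra.right i) ι₂)
    (rbL : ∀ j : rb.ι, Repr ℂ (rb.left j) ι₃) (rbR : ∀ j : rb.ι, Repr ℂ (rb.right j) ι₄) :
    S (a * b) = S b * S a := by
  have E6 : ∀ (c C : A) (i : ra.ι),
      ∑ k ∈ (raL i).index,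
        (LinearMap.mulLeft ℂ c ∘ₗ S) ((raL i).left k) * ((raL i).right k * C)
      = ε (ra.left i) • (c * C) := by
    intro c C i
    calc ∑ k ∈ (raL i).index,
          (LinearMap.mulLeft ℂ c ∘ₗ S) ((raL i).left k) * ((raL i).right k * C)
        = ∑ k ∈ (raL i).index, c * ((S ((raL i).left k) * (raL i).right k) * C) := by
          simp [mul_assoc]
      _ = c * ((∑ k ∈ (raL i).index, S ((raL i).left k) * (raL i).right k) * C) := by
          rw [Finset.sum_mul, Finset.mul_sum]
      _ = ε (ra.left i) • (c * C) := by
          rw [sum_antipode_mul_eq_smul (raL i)]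
          simp [smul_mul_assoc, mul_smul_comm]
  symm
  calc S b * S a
      = ∑ j ∈ rb.index, ∑ i ∈ ra.index,
          (S (rb.left j) * S (ra.left i)) * ((ε (ra.right i) * ε (rb.right j)) • 1) := by
        conv_lhs => rw [← C1 rb, ← C1 ra]
        rw [map_sum, map_sum, Finset.sum_mul_sum]
        refine Finset.sum_congr rfl fun j hj => Finset.sum_congr rfl fun i hi => ?_
        rw [map_smul, map_smul]
        simp [smul_mul_assoc, mul_smul_comm, smul_smul, mul_one]
    _ = ∑ j ∈ rb.index, ∑ i ∈ ra.index,
          (S (rb.left j) * S (ra.left i)) *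
          (∑ l ∈ (rbR j).index, ∑ k ∈ (raR i).index,
            ((raR i).left k * (rbR j).left l) * S ((raR i).right k * (rbR j).right l)) := by
        refine Finset.sum_congr rfl fun j hj => Finset.sum_congr rfl fun i hi => ?_
        congr 1
        exact (sum_mul_antipode_pair (raR i) (rbR j)).symm
    _ = ∑ j ∈ rb.index, ∑ l ∈ (rbR j).index, ∑ i ∈ ra.index, ∑ k ∈ (raR i).index,
          (LinearMap.mulLeft ℂ (S (rb.left j)) ∘ₗ S) (ra.left i) *
          ((LinearMap.id : A →ₗ[ℂ] A) ((raR i).left k) *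
            (LinearMap.mulLeft ℂ ((rbR j).left l) ∘ₗ S ∘ₗ
              LinearMap.mulRight ℂ ((rbR j).right l)) ((raR i).right k)) := by
        refine Finset.sum_congr rfl fun j hj => ?_
        calc ∑ i ∈ ra.index, (S (rb.left j) * S (ra.left i)) *
              (∑ l ∈ (rbR j).index, ∑ k ∈ (raR i).index,
                ((raR i).left k * (rbR j).left l) * S ((raR i).right k * (rbR j).right l))
            = ∑ i ∈ ra.index, ∑ l ∈ (rbR j).index, (S (rb.left j) * S (ra.left i)) *
              (∑ k ∈ (raR i).index,
                ((raR i).left k * (rbR j).left l) * S ((raR i).right k * (rbR j).right l)) := by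
              refine Finset.sum_congr rfl fun i hi => ?_
              rw [Finset.mul_sum]
          _ = ∑ l ∈ (rbR j).index, ∑ i ∈ ra.index, (S (rb.left j) * S (ra.left i)) *
              (∑ k ∈ (raR i).index,
                ((raR i).left k * (rbR j).left l) * S ((raR i).right k * (rbR j).right l)) :=
              Finset.sum_comm
          _ = ∑ l ∈ (rbR j).index, ∑ i ∈ ra.index, ∑ k ∈ (raR i).index,
              (LinearMap.mulLeft ℂ (S (rb.left j)) ∘ₗ S) (ra.left i) *
              ((LinearMap.id : A →ₗ[ℂ] A) ((raR i).left k) *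
                (LinearMap.mulLeft ℂ ((rbR j).left l) ∘ₗ S ∘ₗ
                  LinearMap.mulRight ℂ ((rbR j).right l)) ((raR i).right k)) := by
              refine Finset.sum_congr rfl fun l hl => Finset.sum_congr rfl fun i hi => ?_
              rw [Finset.mul_sum]
              refine Finset.sum_congr rfl fun k hk => ?_
              simp [mul_assoc]
    _ = ∑ j ∈ rb.index, ∑ l ∈ (rbR j).index, ∑ i ∈ ra.index, ∑ k ∈ (raL i).index,
          (LinearMap.mulLeft ℂ (S (rb.left j)) ∘ₗ S) ((raL i).left k) *
          ((LinearMap.id : A →ₗ[ℂ] A) ((raL i).right k) *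
            (LinearMap.mulLeft ℂ ((rbR j).left l) ∘ₗ S ∘ₗ
              LinearMap.mulRight ℂ ((rbR j).right l)) (ra.right i)) := by
        refine Finset.sum_congr rfl fun j hj => Finset.sum_congr rfl fun l hl => ?_
        exact tri_exchange _ _ _ ra raL raR
    _ = ∑ j ∈ rb.index, ∑ l ∈ (rbR j).index, ∑ i ∈ ra.index,
          ε (ra.left i) • (S (rb.left j) *
            ((rbR j).left l * S (ra.right i * (rbR j).right l))) := by
        refine Finset.sum_congr rfl fun j hj => Finset.sum_congr rfl fun l hl =>
          Finset.sum_congr rfl fun i hi => ?_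
        have := E6 (S (rb.left j))
          ((LinearMap.mulLeft ℂ ((rbR j).left l) ∘ₗ S ∘ₗ
            LinearMap.mulRight ℂ ((rbR j).right l)) (ra.right i)) i
        simpa using this
    _ = ∑ j ∈ rb.index, ∑ l ∈ (rbR j).index,
          S (rb.left j) * ((rbR j).left l * S (a * (rbR j).right l)) := by
        refine Finset.sum_congr rfl fun j hj => Finset.sum_congr rfl fun l hl => ?_
        have := collapse_eps_left ra
          (LinearMap.mulLeft ℂ (S (rb.left j)) ∘ₗ
            LinearMap.mulLeft ℂ ((rbR j).left l) ∘ₗ S ∘ₗ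
              LinearMap.mulRight ℂ ((rbR j).right l))
        simpa [mul_assoc] using this
    _ = ∑ j ∈ rb.index, ∑ l ∈ (rbL j).index,
          S ((rbL j).left l) * ((rbL j).right l * S (a * rb.right j)) := by
        have := tri_exchange (A := A) S (LinearMap.id : A →ₗ[ℂ] A) (S ∘ₗ LinearMap.mulLeft ℂ a) rb rbL rbR
        simpa using this
    _ = ∑ j ∈ rb.index, ε (rb.left j) • S (a * rb.right j) := by
        refine Finset.sum_congr rfl fun j hj => ?_
        calc ∑ l ∈ (rbL j).index,
              S ((rbL j).left l) * ((rbL j).right l * S (a * rb.right j))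
            = (∑ l ∈ (rbL j).index, S ((rbL j).left l) * (rbL j).right l) *
                S (a * rb.right j) := by
              rw [Finset.sum_mul]; simp [mul_assoc]
          _ = ε (rb.left j) • S (a * rb.right j) := by
              rw [sum_antipode_mul_eq_smul (rbL j)]; simp [smul_mul_assoc]
    _ = S (a * b) := by
        have := collapse_eps_left rb (S ∘ₗ LinearMap.mulLeft ℂ a)
        simpa using this

lemma S_mul (a b : A) : S (a * b) = S b * S a :=
  S_mul_core a b (ℛ ℂ a) (ℛ ℂ b) (fun i => ℛ ℂ _) (fun i => ℛ ℂ _)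
    (fun j => ℛ ℂ _) (fun j => ℛ ℂ _)

/-- General coassociativity exchange engine. -/
lemma exchange {M : Type*} [AddCommMonoid M] [Module ℂ M]
    (Φ : A ⊗[ℂ] (A ⊗[ℂ] A) →ₗ[ℂ] M) {a : A} (r : Repr ℂ a ι)
    (rL : ∀ i : r.ι, Repr ℂ (r.left i) ι₁) (rR : ∀ i : r.ι, Repr ℂ (r.right i) ι₂) :
    ∑ i ∈ r.index, ∑ j ∈ (rR i).index,
      Φ (r.left i ⊗ₜ[ℂ] ((rR i).left j ⊗ₜ[ℂ] (rR i).right j))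
    = ∑ i ∈ r.index, ∑ j ∈ (rL i).index,
      Φ ((rL i).left j ⊗ₜ[ℂ] ((rL i).right j ⊗ₜ[ℂ] r.right i)) := by
  have h := sum_tmul_tmul_eq r rL rR
  have h2 := congrArg Φ h.symm
  simpa only [map_sum] using h2

/-- Exchange engine for triple products with values in an algebra. -/
lemma tri_exchangeB {B : Type*} [Ring B] [Algebra ℂ B] (f₁ f₂ f₃ : A →ₗ[ℂ] B)
    {a : A} (r : Repr ℂ a ι)
    (rL : ∀ i : r.ι, Repr ℂ (r.left i) ι₁) (rR : ∀ i : r.ι, Repr ℂ (r.right i) ι₂) :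
    ∑ i ∈ r.index, ∑ j ∈ (rR i).index,
      f₁ (r.left i) * (f₂ ((rR i).left j) * f₃ ((rR i).right j))
    = ∑ i ∈ r.index, ∑ j ∈ (rL i).index,
      f₁ ((rL i).left j) * (f₂ ((rL i).right j) * f₃ (r.right i)) := by
  have h := exchange ((LinearMap.mul' ℂ B) ∘ₗ
    LinearMap.lTensor B (LinearMap.mul' ℂ B) ∘ₗ map f₁ (map f₂ f₃)) r rL rR
  simpa using h

/-- The "swapped antipode" map `a ↦ Σ S(a₂) ⊗ S(a₁)`. -/
noncomputable def Wmap : A →ₗ[ℂ] A ⊗[ℂ] A :=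
  (TensorProduct.comm ℂ A A).toLinearMap ∘ₗ map S S ∘ₗ comul

lemma Wmap_apply {a : A} (r : Repr ℂ a ι) :
    Wmap a = ∑ i ∈ r.index, S (r.right i) ⊗ₜ[ℂ] S (r.left i) := by
  rw [Wmap]
  simp only [LinearMap.comp_apply, ← r.eq, map_sum]
  simp [map_tmul]

lemma collapse_eps_leftM {M : Type*} [AddCommMonoid M] [Module ℂ M]
    {x : A} (r : Repr ℂ x ι) (f : A →ₗ[ℂ] M) :
    ∑ i ∈ r.index, ε (r.left i) • f (r.right i) = f x := by
  calc ∑ i ∈ r.index, ε (r.left i) • f (r.right i)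
      = f (∑ i ∈ r.index, ε (r.left i) • r.right i) := by simp [map_sum, map_smul]
    _ = f x := by rw [C2]

lemma collapse_eps_rightM {M : Type*} [AddCommMonoid M] [Module ℂ M]
    {x : A} (r : Repr ℂ x ι) (f : A →ₗ[ℂ] M) :
    ∑ i ∈ r.index, ε (r.right i) • f (r.left i) = f x := by
  calc ∑ i ∈ r.index, ε (r.right i) • f (r.left i)
      = f (∑ i ∈ r.index, ε (r.right i) • r.left i) := by simp [map_sum, map_smul]
    _ = f x := by rw [C1]

lemma claimB (x : A) (rx : Repr ℂ x ι) :
    ∑ k ∈ rx.index, Δ (rx.left k) * Wmap (rx.right k)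
    = ε x • ((1 : A) ⊗ₜ[ℂ] (1 : A)) := by
  set Φ : A ⊗[ℂ] (A ⊗[ℂ] A) →ₗ[ℂ] A ⊗[ℂ] A :=
    (LinearMap.mul' ℂ (A ⊗[ℂ] A)) ∘ₗ (map LinearMap.id Wmap) ∘ₗ
      (TensorProduct.assoc ℂ A A A).symm.toLinearMap with hΦ
  have hΦt : ∀ u v w : A, Φ (u ⊗ₜ[ℂ] (v ⊗ₜ[ℂ] w)) = (u ⊗ₜ[ℂ] v) * Wmap w := by
    intro u v w; simp [hΦ]
  have inner : ∀ (u z : A) (rz : Repr ℂ z (A × A)),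
      ∑ j ∈ rz.index, (u ⊗ₜ[ℂ] rz.left j) * Wmap (rz.right j)
      = (u * S z) ⊗ₜ[ℂ] (1 : A) := by
    intro u z rz
    set Ψ : A ⊗[ℂ] (A ⊗[ℂ] A) →ₗ[ℂ] A ⊗[ℂ] A :=
      (map (LinearMap.mulLeft ℂ u ∘ₗ S) ((LinearMap.mul' ℂ A) ∘ₗ LinearMap.lTensor A S)) ∘ₗ
        (TensorProduct.comm ℂ (A ⊗[ℂ] A) A).toLinearMap ∘ₗ
        (TensorProduct.assoc ℂ A A A).symm.toLinearMap with hΨ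
    have hΨt : ∀ p q t : A, Ψ (p ⊗ₜ[ℂ] (q ⊗ₜ[ℂ] t)) = (u * S t) ⊗ₜ[ℂ] (p * S q) := by
      intro p q t; simp [hΨ]
    calc ∑ j ∈ rz.index, (u ⊗ₜ[ℂ] rz.left j) * Wmap (rz.right j)
        = ∑ j ∈ rz.index, ∑ m ∈ (ℛ ℂ (rz.right j)).index,
            Ψ (rz.left j ⊗ₜ[ℂ]
              ((ℛ ℂ (rz.right j)).left m ⊗ₜ[ℂ] (ℛ ℂ (rz.right j)).right m)) := by
          refine Finset.sum_congr rfl fun j hj => ?_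
          rw [Wmap_apply (ℛ ℂ (rz.right j)), Finset.mul_sum]
          refine Finset.sum_congr rfl fun m hm => ?_
          rw [hΨt, Algebra.TensorProduct.tmul_mul_tmul]
        _ = ∑ j ∈ rz.index, ∑ m ∈ (ℛ ℂ (rz.left j)).index,
            Ψ ((ℛ ℂ (rz.left j)).left m ⊗ₜ[ℂ]
              ((ℛ ℂ (rz.left j)).right m ⊗ₜ[ℂ] rz.right j)) :=
          exchange Ψ rz _ _
        _ = ∑ j ∈ rz.index, ε (rz.left j) • ((u * S (rz.right j)) ⊗ₜ[ℂ] (1 : A)) := by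
          refine Finset.sum_congr rfl fun j hj => ?_
          have : ∀ m, Ψ ((ℛ ℂ (rz.left j)).left m ⊗ₜ[ℂ]
              ((ℛ ℂ (rz.left j)).right m ⊗ₜ[ℂ] rz.right j))
              = (u * S (rz.right j)) ⊗ₜ[ℂ]
                ((ℛ ℂ (rz.left j)).left m * S ((ℛ ℂ (rz.left j)).right m)) := fun m => hΨt _ _ _
          rw [Finset.sum_congr rfl (fun m _ => this m), ← TensorProduct.tmul_sum,
            sum_mul_antipode_eq_smul (ℛ ℂ (rz.left j)), tmul_smul]
        _ = (u * S z) ⊗ₜ[ℂ] (1 : A) := by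
          have := collapse_eps_leftM rz
            (((TensorProduct.mk ℂ A A).flip 1) ∘ₗ LinearMap.mulLeft ℂ u ∘ₗ S)
          simpa using this
  calc ∑ k ∈ rx.index, Δ (rx.left k) * Wmap (rx.right k)
      = ∑ k ∈ rx.index, ∑ j ∈ (ℛ ℂ (rx.left k)).index,
          Φ ((ℛ ℂ (rx.left k)).left j ⊗ₜ[ℂ]
            ((ℛ ℂ (rx.left k)).right j ⊗ₜ[ℂ] rx.right k)) := by
        refine Finset.sum_congr rfl fun k hk => ?_
        rw [← (ℛ ℂ (rx.left k)).eq, Finset.sum_mul]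
        refine Finset.sum_congr rfl fun j hj => (hΦt _ _ _).symm
    _ = ∑ k ∈ rx.index, ∑ j ∈ (ℛ ℂ (rx.right k)).index,
          Φ (rx.left k ⊗ₜ[ℂ]
            ((ℛ ℂ (rx.right k)).left j ⊗ₜ[ℂ] (ℛ ℂ (rx.right k)).right j)) :=
        (exchange Φ rx _ _).symm
    _ = ∑ k ∈ rx.index, (rx.left k * S (rx.right k)) ⊗ₜ[ℂ] (1 : A) := by
        refine Finset.sum_congr rfl fun k hk => ?_
        rw [Finset.sum_congr rfl (fun j _ => hΦt _ _ _)]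
        exact inner _ _ _
    _ = ε x • ((1 : A) ⊗ₜ[ℂ] (1 : A)) := by
        rw [← TensorProduct.sum_tmul, sum_mul_antipode_eq_smul rx]
        simp [smul_tmul']

lemma comul_S (a : A) : Δ (S a) = Wmap a := by
  calc Δ (S a)
      = ∑ i ∈ (ℛ ℂ a).index, ε ((ℛ ℂ a).right i) • Δ (S ((ℛ ℂ a).left i)) := by
        conv_lhs => rw [← C1 (ℛ ℂ a)]
        simp [map_sum, map_smul]
    _ = ∑ i ∈ (ℛ ℂ a).index, ∑ k ∈ (ℛ ℂ ((ℛ ℂ a).right i)).index,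
          (Δ ∘ₗ S) ((ℛ ℂ a).left i) *
          (Δ ((ℛ ℂ ((ℛ ℂ a).right i)).left k) *
            Wmap ((ℛ ℂ ((ℛ ℂ a).right i)).right k)) := by
        refine Finset.sum_congr rfl fun i hi => ?_
        rw [← Finset.mul_sum, claimB _ (ℛ ℂ ((ℛ ℂ a).right i))]
        simp [mul_smul_comm, ← Algebra.TensorProduct.one_def]
    _ = ∑ i ∈ (ℛ ℂ a).index, ∑ k ∈ (ℛ ℂ ((ℛ ℂ a).left i)).index,
          (Δ ∘ₗ S) ((ℛ ℂ ((ℛ ℂ a).left i)).left k) *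
          (Δ ((ℛ ℂ ((ℛ ℂ a).left i)).right k) * Wmap ((ℛ ℂ a).right i)) :=
        tri_exchangeB (Δ ∘ₗ S) Δ Wmap (ℛ ℂ a) _ _
    _ = ∑ i ∈ (ℛ ℂ a).index, ε ((ℛ ℂ a).left i) • Wmap ((ℛ ℂ a).right i) := by
        refine Finset.sum_congr rfl fun i hi => ?_
        calc ∑ k ∈ (ℛ ℂ ((ℛ ℂ a).left i)).index,
              (Δ ∘ₗ S) ((ℛ ℂ ((ℛ ℂ a).left i)).left k) *
              (Δ ((ℛ ℂ ((ℛ ℂ a).left i)).right k) * Wmap ((ℛ ℂ a).right i))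
            = (∑ k ∈ (ℛ ℂ ((ℛ ℂ a).left i)).index,
                Δ (S ((ℛ ℂ ((ℛ ℂ a).left i)).left k) *
                  ((ℛ ℂ ((ℛ ℂ a).left i)).right k))) * Wmap ((ℛ ℂ a).right i) := by
              rw [Finset.sum_mul]
              refine Finset.sum_congr rfl fun k hk => ?_
              simp [mul_assoc, Bialgebra.comul_mul]
          _ = ε ((ℛ ℂ a).left i) • Wmap ((ℛ ℂ a).right i) := by
              rw [← map_sum, sum_antipode_mul_eq_smul (ℛ ℂ ((ℛ ℂ a).left i))]
              simp [smul_mul_assoc, ← Algebra.TensorProduct.one_def]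
    _ = Wmap a := collapse_eps_leftM (ℛ ℂ a) Wmap

lemma comul_S_map : (Δ ∘ₗ S : A →ₗ[ℂ] A ⊗[ℂ] A) = Wmap :=
  LinearMap.ext comul_S

lemma rAct_apply (f : A →ₗ[ℂ] ℂ) {a : A} (r : Repr ℂ a ι) :
    rAct f a = ∑ i ∈ r.index, f (r.left i) • r.right i := by
  rw [rAct]
  simp only [LinearMap.comp_apply, ← r.eq, map_sum, LinearMap.rTensor_tmul]
  simp

/-- Repr of `S a` from a Repr of `a`. -/
noncomputable def reprS {a : A} (r : Repr ℂ a ι) : Repr ℂ (S a) ι where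
  index := r.index
  left := fun i => S (r.right i)
  right := fun i => S (r.left i)
  eq := by rw [comul_S a, Wmap_apply r]

section Chi
variable (χ : A →ₗ[ℂ] ℂ) (hm : ∀ x y : A, χ (x * y) = χ x * χ y) (hone : χ 1 = 1)

include hm hone in
lemma conv_Sχ {a : A} (r : Repr ℂ a ι) :
    ∑ i ∈ r.index, χ (S (r.left i)) * χ (r.right i) = ε a := by
  have h := congrArg χ (sum_antipode_mul_eq_smul (R := ℂ) r)
  simp only [map_sum, hm, map_smul, hone, smul_eq_mul, mul_one] at h
  exact h

include hm hone in
lemma conv_χS {a : A} (r : Repr ℂ a ι) :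
    ∑ i ∈ r.index, χ (r.left i) * χ (S (r.right i)) = ε a := by
  have h := congrArg χ (sum_mul_antipode_eq_smul (R := ℂ) r)
  simp only [map_sum, hm, map_smul, hone, smul_eq_mul, mul_one] at h
  exact h

include hm hone in
lemma chi_S_S (a : A) : χ (S (S a)) = χ a := by
  calc χ (S (S a))
      = ∑ i ∈ (ℛ ℂ a).index, ε ((ℛ ℂ a).left i) • χ (S (S ((ℛ ℂ a).right i))) :=
        (collapse_eps_leftM (ℛ ℂ a) (χ ∘ₗ S ∘ₗ S)).symm
    _ = ∑ i ∈ (ℛ ℂ a).index, ∑ j ∈ (ℛ ℂ ((ℛ ℂ a).left i)).index,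
          χ ((ℛ ℂ ((ℛ ℂ a).left i)).left j) *
            (χ (S ((ℛ ℂ ((ℛ ℂ a).left i)).right j)) * χ (S (S ((ℛ ℂ a).right i)))) := by
        refine Finset.sum_congr rfl fun i hi => ?_
        rw [smul_eq_mul, ← conv_χS χ hm hone (ℛ ℂ ((ℛ ℂ a).left i)), Finset.sum_mul]
        exact Finset.sum_congr rfl fun j _ => mul_assoc _ _ _
    _ = ∑ i ∈ (ℛ ℂ a).index, ∑ j ∈ (ℛ ℂ ((ℛ ℂ a).right i)).index,
          χ ((ℛ ℂ a).left i) *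
            (χ (S ((ℛ ℂ ((ℛ ℂ a).right i)).left j)) *
              χ (S (S ((ℛ ℂ ((ℛ ℂ a).right i)).right j)))) :=
        (tri_exchangeB (B := ℂ) χ (χ ∘ₗ S) (χ ∘ₗ S ∘ₗ S) (ℛ ℂ a) _ _).symm
    _ = ∑ i ∈ (ℛ ℂ a).index, χ ((ℛ ℂ a).left i) * ε ((ℛ ℂ a).right i) := by
        refine Finset.sum_congr rfl fun i hi => ?_
        rw [← Finset.mul_sum]
        congr 1
        have h := conv_Sχ χ hm hone (reprS (ℛ ℂ ((ℛ ℂ a).right i)))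
        simp only [reprS] at h
        rw [eps_S] at h
        rw [← h]
        exact Finset.sum_congr rfl fun j _ => mul_comm _ _
    _ = χ a := by
        have := collapse_eps_rightM (ℛ ℂ a) χ
        simp only [smul_eq_mul] at this
        rw [← this]
        exact Finset.sum_congr rfl fun i hi => mul_comm _ _

end Chi

noncomputable def scal2 (f g : A →ₗ[ℂ] ℂ) : A ⊗[ℂ] (A ⊗[ℂ] A) →ₗ[ℂ] A :=
  (TensorProduct.lid ℂ A).toLinearMap ∘ₗ
    map f ((TensorProduct.lid ℂ A).toLinearMap ∘ₗ map g LinearMap.id)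

@[simp] lemma scal2_tmul (f g : A →ₗ[ℂ] ℂ) (x y z : A) :
    scal2 f g (x ⊗ₜ[ℂ] (y ⊗ₜ[ℂ] z)) = f x • (g y • z) := by
  simp [scal2, smul_comm (g y) (f x)]

section Chi2
variable (χ : A →ₗ[ℂ] ℂ) (hm : ∀ x y : A, χ (x * y) = χ x * χ y) (hone : χ 1 = 1)

include hm hone in
lemma rAct_inv (a : A) : rAct χ (rAct (χ ∘ₗ S) a) = a := by
  calc rAct χ (rAct (χ ∘ₗ S) a)
      = ∑ i ∈ (ℛ ℂ a).index, χ (S ((ℛ ℂ a).left i)) • rAct χ ((ℛ ℂ a).right i) := by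
        rw [rAct_apply (χ ∘ₗ S) (ℛ ℂ a), map_sum]
        exact Finset.sum_congr rfl fun i _ => by rw [map_smul]; rfl
    _ = ∑ i ∈ (ℛ ℂ a).index, ∑ j ∈ (ℛ ℂ ((ℛ ℂ a).right i)).index,
          scal2 (χ ∘ₗ S) χ ((ℛ ℂ a).left i ⊗ₜ[ℂ]
            ((ℛ ℂ ((ℛ ℂ a).right i)).left j ⊗ₜ[ℂ] (ℛ ℂ ((ℛ ℂ a).right i)).right j)) := by
        refine Finset.sum_congr rfl fun i hi => ?_
        rw [rAct_apply χ (ℛ ℂ ((ℛ ℂ a).right i)), Finset.smul_sum]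
        exact Finset.sum_congr rfl fun j _ => by simp
    _ = ∑ i ∈ (ℛ ℂ a).index, ∑ j ∈ (ℛ ℂ ((ℛ ℂ a).left i)).index,
          scal2 (χ ∘ₗ S) χ ((ℛ ℂ ((ℛ ℂ a).left i)).left j ⊗ₜ[ℂ]
            ((ℛ ℂ ((ℛ ℂ a).left i)).right j ⊗ₜ[ℂ] (ℛ ℂ a).right i)) :=
        exchange (scal2 (χ ∘ₗ S) χ) (ℛ ℂ a) _ _
    _ = ∑ i ∈ (ℛ ℂ a).index, ε ((ℛ ℂ a).left i) • (ℛ ℂ a).right i := by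
        refine Finset.sum_congr rfl fun i hi => ?_
        have h := conv_Sχ χ hm hone (ℛ ℂ ((ℛ ℂ a).left i))
        calc ∑ j ∈ (ℛ ℂ ((ℛ ℂ a).left i)).index,
              scal2 (χ ∘ₗ S) χ ((ℛ ℂ ((ℛ ℂ a).left i)).left j ⊗ₜ[ℂ]
                ((ℛ ℂ ((ℛ ℂ a).left i)).right j ⊗ₜ[ℂ] (ℛ ℂ a).right i))
            = (∑ j ∈ (ℛ ℂ ((ℛ ℂ a).left i)).index,
                χ (S ((ℛ ℂ ((ℛ ℂ a).left i)).left j)) *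
                  χ ((ℛ ℂ ((ℛ ℂ a).left i)).right j)) • (ℛ ℂ a).right i := by
              rw [Finset.sum_smul]
              exact Finset.sum_congr rfl fun j _ => by simp [smul_smul]
          _ = ε ((ℛ ℂ a).left i) • (ℛ ℂ a).right i := by rw [h]
    _ = a := C2 (ℛ ℂ a)

end Chi2



section Chi3
variable (χ : A →ₗ[ℂ] ℂ) (hm : ∀ x y : A, χ (x * y) = χ x * χ y) (hone : χ 1 = 1)

include hm hone in
lemma rAct_S2 (y : A) :
    rAct (χ ∘ₗ S) (S (S y)) = S (S (rAct (χ ∘ₗ S) y)) := by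
  rw [rAct_apply (χ ∘ₗ S) (reprS (reprS (ℛ ℂ y))), rAct_apply (χ ∘ₗ S) (ℛ ℂ y)]
  simp only [reprS, map_sum, map_smul]
  refine Finset.sum_congr rfl fun i _ => ?_
  simp only [LinearMap.comp_apply]
  rw [chi_S_S χ hm hone (S ((ℛ ℂ y).left i))]

end Chi3

lemma sandwich_eps {x : A} (rx : Repr ℂ x ι) (C : A) :
    ∑ k ∈ rx.index, S (rx.left k) * (rx.right k * C) = ε x • C := by
  calc ∑ k ∈ rx.index, S (rx.left k) * (rx.right k * C)
      = (∑ k ∈ rx.index, S (rx.left k) * rx.right k) * C := by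
        rw [Finset.sum_mul]
        exact Finset.sum_congr rfl fun k _ => (mul_assoc _ _ _).symm
    _ = ε x • C := by rw [sum_antipode_mul_eq_smul rx, smul_mul_assoc, one_mul]

section Phi
variable (φ : A →ₗ[ℂ] ℂ)
  (hφL : ∀ a : A, (TensorProduct.rid ℂ A) (LinearMap.lTensor A φ (Coalgebra.comul a))
    = φ a • (1 : A))

include hφL in
lemma Pphi {x : A} (r : Repr ℂ x ι) :
    ∑ i ∈ r.index, φ (r.right i) • r.left i = φ x • (1 : A) := by
  have h := hφL x
  rw [← r.eq, map_sum, map_sum] at h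
  simpa using h

include hφL in
lemma sli (a b : A) (ra : Repr ℂ a ι) (rb : Repr ℂ b κ) :
    ∑ i ∈ ra.index, φ (ra.right i * b) • S (ra.left i)
    = ∑ j ∈ rb.index, φ (a * rb.right j) • rb.left j := by
  have step1 : ∀ (x : A) (rx : Repr ℂ x (A × A)),
      ∑ k ∈ rx.index, ∑ j ∈ rb.index,
        φ (rx.right k * rb.right j) • (rx.left k * rb.left j) = φ (x * b) • (1 : A) := by
    intro x rx
    have h := Pphi φ hφL (reprMul rx rb)
    simpa [reprMul, Finset.sum_product] using h
  calc ∑ i ∈ ra.index, φ (ra.right i * b) • S (ra.left i)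
      = ∑ i ∈ ra.index, S (ra.left i) * (φ (ra.right i * b) • 1) := by
        refine Finset.sum_congr rfl fun i _ => ?_
        rw [mul_smul_comm, mul_one]
    _ = ∑ i ∈ ra.index, ∑ j ∈ rb.index, ∑ k ∈ (ℛ ℂ (ra.right i)).index,
          S (ra.left i) * ((ℛ ℂ (ra.right i)).left k *
            (φ ((ℛ ℂ (ra.right i)).right k * rb.right j) • rb.left j)) := by
        refine Finset.sum_congr rfl fun i _ => ?_
        rw [← step1 (ra.right i) (ℛ ℂ (ra.right i)), Finset.mul_sum]
        rw [Finset.sum_comm]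
        refine Finset.sum_congr rfl fun j _ => ?_
        rw [Finset.mul_sum]
        refine Finset.sum_congr rfl fun k _ => ?_
        rw [← mul_smul_comm]
    _ = ∑ j ∈ rb.index, ∑ i ∈ ra.index, ∑ k ∈ (ℛ ℂ (ra.right i)).index,
          S (ra.left i) * ((ℛ ℂ (ra.right i)).left k *
            (φ ((ℛ ℂ (ra.right i)).right k * rb.right j) • rb.left j)) :=
        Finset.sum_comm
    _ = ∑ j ∈ rb.index, ∑ i ∈ ra.index, ∑ k ∈ (ℛ ℂ (ra.left i)).index,
          S ((ℛ ℂ (ra.left i)).left k) * ((ℛ ℂ (ra.left i)).right k *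
            (φ ((ra.right i) * rb.right j) • rb.left j)) := by
        refine Finset.sum_congr rfl fun j _ => ?_
        have h := tri_exchange S LinearMap.id
          ((φ ∘ₗ LinearMap.mulRight ℂ (rb.right j)).smulRight (rb.left j)) ra
          (fun i => ℛ ℂ (ra.left i)) (fun i => ℛ ℂ (ra.right i))
        simpa using h
    _ = ∑ j ∈ rb.index, ∑ i ∈ ra.index,
          ε (ra.left i) • (φ ((ra.right i) * rb.right j) • rb.left j) := by
        refine Finset.sum_congr rfl fun j _ => Finset.sum_congr rfl fun i _ => ?_
        exact sandwich_eps (ℛ ℂ (ra.left i)) _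
    _ = ∑ j ∈ rb.index, φ (a * rb.right j) • rb.left j := by
        refine Finset.sum_congr rfl fun j _ => ?_
        have h := collapse_eps_leftM ra
          ((φ ∘ₗ LinearMap.mulRight ℂ (rb.right j)).smulRight (rb.left j))
        simpa using h

end Phi

section Faithful
variable (φ : A →ₗ[ℂ] ℂ) (hφf2 : ∀ a : A, (∀ b : A, φ (b * a) = 0) → a = 0)

/-- The evaluation map `t ↦ Σ φ(a yᵢ) xᵢ` on `A ⊗ A`. -/
noncomputable def Gmap (a : A) : A ⊗[ℂ] A →ₗ[ℂ] A :=
  (TensorProduct.rid ℂ A).toLinearMap ∘ₗ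
    LinearMap.lTensor A (φ ∘ₗ LinearMap.mulLeft ℂ a)

@[simp] lemma Gmap_tmul (a x y : A) : Gmap φ a (x ⊗ₜ[ℂ] y) = φ (a * y) • x := by
  simp [Gmap]

include hφf2 in
lemma faithful_tensor (t : A ⊗[ℂ] A) (h : ∀ a : A, Gmap φ a t = 0) : t = 0 := by
  classical
  set b := Module.Basis.ofVectorSpace ℂ A with hb
  set e := (TensorProduct.congr b.repr (LinearEquiv.refl ℂ A)).trans
    (TensorProduct.finsuppScalarLeft ℂ A _) with he
  have key : ∀ (t : A ⊗[ℂ] A) (a : A) (i : _), φ (a * (e t) i) = b.repr (Gmap φ a t) i := by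
    intro t a i
    induction t using TensorProduct.induction_on with
    | zero => simp
    | tmul x y =>
        simp only [he, LinearEquiv.trans_apply, TensorProduct.congr_tmul,
          LinearEquiv.refl_apply, TensorProduct.finsuppScalarLeft_apply_tmul_apply,
          Gmap_tmul, map_smul]
        rw [mul_smul_comm, map_smul]
        simp [mul_comm]
    | add u v hu hv =>
        simp only [map_add, Finsupp.add_apply, mul_add, hu, hv]
  have hz : ∀ i, (e t) i = 0 := by
    intro i
    refine hφf2 _ (fun a => ?_)
    rw [key t a i, h a, map_zero]
    rfl
  have : e t = 0 := Finsupp.ext hz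
  have := congrArg e.symm this
  simpa using this

end Faithful

section Sigma
variable (φ : A →ₗ[ℂ] ℂ)
  (hφL : ∀ a : A, (TensorProduct.rid ℂ A) (LinearMap.lTensor A φ (Coalgebra.comul a))
    = φ a • (1 : A))
  (hφf2 : ∀ a : A, (∀ b : A, φ (b * a) = 0) → a = 0)
  (σ : A ≃ₐ[ℂ] A) (hσ : ∀ a b : A, φ (a * b) = φ (b * σ a))

include hφL hσ in
lemma IIIlem (c a : A) :
    Gmap φ a (Δ (σ c)) = Gmap φ a ((map (S ∘ₗ S) σ.toLinearMap) (Δ c)) := by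
  have lhs1 : Gmap φ a (Δ (σ c)) =
      ∑ j ∈ (ℛ ℂ (σ c)).index, φ (a * (ℛ ℂ (σ c)).right j) • (ℛ ℂ (σ c)).left j := by
    rw [← (ℛ ℂ (σ c)).eq, map_sum]
    exact Finset.sum_congr rfl fun j _ => Gmap_tmul φ a _ _
  have rhs1 : Gmap φ a ((map (S ∘ₗ S) σ.toLinearMap) (Δ c)) =
      ∑ i ∈ (ℛ ℂ c).index, φ (a * σ ((ℛ ℂ c).right i)) • S (S ((ℛ ℂ c).left i)) := by
    rw [← (ℛ ℂ c).eq, map_sum, map_sum]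
    refine Finset.sum_congr rfl fun i _ => ?_
    rw [map_tmul]
    exact Gmap_tmul φ a _ _
  rw [lhs1, rhs1]
  calc ∑ j ∈ (ℛ ℂ (σ c)).index, φ (a * (ℛ ℂ (σ c)).right j) • (ℛ ℂ (σ c)).left j
      = ∑ i ∈ (ℛ ℂ a).index, φ ((ℛ ℂ a).right i * σ c) • S ((ℛ ℂ a).left i) :=
        (sli φ hφL a (σ c) (ℛ ℂ a) (ℛ ℂ (σ c))).symm
    _ = ∑ i ∈ (ℛ ℂ a).index, φ (c * (ℛ ℂ a).right i) • S ((ℛ ℂ a).left i) := by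
        refine Finset.sum_congr rfl fun i _ => ?_
        rw [← hσ c ((ℛ ℂ a).right i)]
    _ = ∑ i ∈ (ℛ ℂ c).index, φ ((ℛ ℂ c).right i * a) • S (S ((ℛ ℂ c).left i)) := by
        have h := congrArg S (sli φ hφL c a (ℛ ℂ c) (ℛ ℂ a))
        rw [map_sum, map_sum] at h
        simp only [map_smul] at h
        exact h.symm
    _ = ∑ i ∈ (ℛ ℂ c).index, φ (a * σ ((ℛ ℂ c).right i)) • S (S ((ℛ ℂ c).left i)) := by
        refine Finset.sum_congr rfl fun i _ => ?_
        rw [hσ ((ℛ ℂ c).right i) a]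

include hφL hφf2 hσ in
lemma R3 (c : A) : Δ (σ c) = (map (S ∘ₗ S) σ.toLinearMap) (Δ c) := by
  have h := faithful_tensor φ hφf2
    (Δ (σ c) - (map (S ∘ₗ S) σ.toLinearMap) (Δ c))
    (fun a => by rw [map_sub, IIIlem φ hφL σ hσ c a, sub_self])
  exact sub_eq_zero.mp h

include hφL hφf2 hσ in
lemma sigma_formula (c : A) (r : Repr ℂ c ι) :
    σ c = ∑ i ∈ r.index, ε (σ (r.right i)) • S (S (r.left i)) := by
  have h := C1 (A := A) ⟨r.index, fun i => S (S (r.left i)), fun i => σ (r.right i), by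
    rw [R3 φ hφL hφf2 σ hσ c, ← r.eq, map_sum]
    exact Finset.sum_congr rfl fun i _ => by simp⟩
  exact h.symm

include hφL hφf2 hσ in
lemma E1lem (x : A) :
    σ (S x) = S (S (S (rAct
      ((Coalgebra.counit ∘ₗ σ.toLinearMap : A →ₗ[ℂ] ℂ) ∘ₗ S) x))) := by
  rw [sigma_formula φ hφL hφf2 σ hσ (S x) (reprS (ℛ ℂ x)),
    rAct_apply ((Coalgebra.counit ∘ₗ σ.toLinearMap : A →ₗ[ℂ] ℂ) ∘ₗ S) (ℛ ℂ x)]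
  simp only [reprS, map_sum, map_smul]
  rfl

end Sigma

lemma R1lem (φ : A →ₗ[ℂ] ℂ)
    (hφf2 : ∀ a : A, (∀ b : A, φ (b * a) = 0) → a = 0)
    (hS : Function.Bijective (antipode (R := ℂ) (A := A)))
    (σ : A ≃ₐ[ℂ] A) (hσ : ∀ a b : A, φ (a * b) = φ (b * σ a))
    (σ' : A ≃ₐ[ℂ] A)
    (hσ' : ∀ a b : A, φ (S (a * b)) = φ (S (b * σ' a)))
    (a : A) : σ (S (σ' a)) = S a := by
  have key : ∀ c : A, φ (c * (σ (S (σ' a)) - S a)) = 0 := by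
    intro c
    obtain ⟨b, rfl⟩ := hS.2 c
    rw [mul_sub, map_sub]
    have h1 : φ (S b * σ (S (σ' a))) = φ (S (σ' a) * S b) := (hσ (S (σ' a)) (S b)).symm
    rw [h1, ← S_mul b (σ' a), ← hσ' a b, S_mul a b]
    exact sub_self _
  exact sub_eq_zero.mp (hφf2 _ key)

theorem aux_final
    {A : Type*} [Ring A] [HopfAlgebra ℂ A]
    (hS : Function.Bijective (antipode (R := ℂ) (A := A)))
    (φ : A →ₗ[ℂ] ℂ) (hφ0 : φ ≠ 0)
    (hφL : ∀ a : A,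
      (TensorProduct.rid ℂ A) (LinearMap.lTensor A φ (Coalgebra.comul a)) = φ a • (1 : A))
    (hφf1 : ∀ a : A, (∀ b : A, φ (a * b) = 0) → a = 0)
    (hφf2 : ∀ a : A, (∀ b : A, φ (b * a) = 0) → a = 0)
    (σ : A ≃ₐ[ℂ] A) (hσ : ∀ a b : A, φ (a * b) = φ (b * σ a))
    (hψR : ∀ a : A,
      (TensorProduct.lid ℂ A) (LinearMap.rTensor A (φ ∘ₗ antipode (R := ℂ))
        (Coalgebra.comul a)) = φ (antipode (R := ℂ) a) • (1 : A))
    (σ' : A ≃ₐ[ℂ] A)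
    (hσ' : ∀ a b : A, φ (antipode (R := ℂ) (a * b)) = φ (antipode (R := ℂ) (b * σ' a))) :
    ∀ a : A,
      rAct (Coalgebra.counit ∘ₗ σ.toLinearMap) a =
        antipode (R := ℂ) (antipode (R := ℂ) (σ' a)) := by
  intro a
  set χ : A →ₗ[ℂ] ℂ := Coalgebra.counit ∘ₗ σ.toLinearMap with hχ
  have hm : ∀ x y : A, χ (x * y) = χ x * χ y := by
    intro x y
    simp [hχ, map_mul, Bialgebra.counit_mul]
  have hone : χ 1 = 1 := by simp [hχ, Bialgebra.counit_one]
  have e3 := rAct_S2 χ hm hone (σ' a)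
  have e1 := E1lem φ hφL hφf2 σ hσ (σ' a)
  have r1 := R1lem φ hφf2 hS σ hσ σ' hσ' a
  have h5 : antipode (R := ℂ) (antipode (R := ℂ)
      (rAct (χ ∘ₗ antipode (R := ℂ)) (σ' a))) = a := by
    apply hS.1
    rw [← r1, e1]
  have h1 : rAct (χ ∘ₗ antipode (R := ℂ))
      (antipode (R := ℂ) (antipode (R := ℂ) (σ' a))) = a := by rw [e3, h5]
  calc rAct χ a
      = rAct χ (rAct (χ ∘ₗ antipode (R := ℂ))
          (antipode (R := ℂ) (antipode (R := ℂ) (σ' a)))) := by rw [h1]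
    _ = antipode (R := ℂ) (antipode (R := ℂ) (σ' a)) := rAct_inv χ hm hone _

end AuxHopfDev

/-- `Σ ε(σ(a₍₁₎)) a₍₂₎ = S²(σ'(a))`, i.e. `a ⊲ δ̂⁻¹ = S²(σ'(a))` where
`δ̂⁻¹ = ε∘σ` is the inverse of the modular element of the dual. -/
theorem dual_modular_element_right_action
    {A : Type*} [Ring A] [HopfAlgebra ℂ A]
    (hS : Function.Bijective (antipode (R := ℂ) (A := A)))
    (φ : A →ₗ[ℂ] ℂ) (hφ0 : φ ≠ 0)
    (hφL : ∀ a : A,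
      (TensorProduct.rid ℂ A) (LinearMap.lTensor A φ (Coalgebra.comul a)) = φ a • (1 : A))
    (hφf1 : ∀ a : A, (∀ b : A, φ (a * b) = 0) → a = 0)
    (hφf2 : ∀ a : A, (∀ b : A, φ (b * a) = 0) → a = 0)
    (σ : A ≃ₐ[ℂ] A) (hσ : ∀ a b : A, φ (a * b) = φ (b * σ a))
    (hψR : ∀ a : A,
      (TensorProduct.lid ℂ A) (LinearMap.rTensor A (φ ∘ₗ antipode (R := ℂ))
        (Coalgebra.comul a)) = φ (antipode (R := ℂ) a) • (1 : A))
    (σ' : A ≃ₐ[ℂ] A)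
    (hσ' : ∀ a b : A, φ (antipode (R := ℂ) (a * b)) = φ (antipode (R := ℂ) (b * σ' a))) :
    ∀ a : A,
      rAct (Coalgebra.counit ∘ₗ σ.toLinearMap) a =
        antipode (R := ℂ) (antipode (R := ℂ) (σ' a)) :=
  aux_final hS φ hφ0 hφL hφf1 hφf2 σ hσ hψR σ' hσ'
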